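/- Let n ≥ 1, let p_1, …, p_n be the n distinct complex roots of f_n, set α_j = 1/n for j = 1,…,n, α_{n+1} = −1, and p_{n+1} = 1. Then all balance quantities vanish: F_k = 2·∑_{j≠k, 1≤j≤n+1} α_j/(p_k − p_j) + α_k/p_k = 0 for every k = 1, 2, …, n+1. -/

import Mathlib

open Polynomial

/-- The polynomial `f_n(z) = ∑_{j=0}^n (binom(n,j))^2 z^j` with complex coefficients. -/
noncomputable def hyperPoly (n : ℕ) : Polynomial ℂ :=
  ∑ j ∈ Finset.range (n + 1), Polynomial.C ((n.choose j : ℂ) ^ 2) * Polynomial.X ^ j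

lemma coeff_hyperPoly (n m : ℕ) : (hyperPoly n).coeff m = ((n.choose m : ℂ)) ^ 2 := by
  unfold hyperPoly
  rw [Polynomial.finset_sum_coeff]
  simp only [Polynomial.coeff_C_mul, Polynomial.coeff_X_pow, mul_ite, mul_one, mul_zero]
  rw [Finset.sum_ite_eq]
  by_cases h : m ∈ Finset.range (n + 1)
  · simp [h]
  · simp only [h, if_false]
    rw [Nat.choose_eq_zero_of_lt (by simpa using h)]
    norm_num

lemma key (n m : ℕ) :
    ((m : ℂ) + 1) ^ 2 * (n.choose (m + 1) : ℂ) ^ 2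
      = ((n : ℂ) - (m : ℂ)) ^ 2 * (n.choose m : ℂ) ^ 2 := by
  rcases le_or_gt m n with h | h
  · have h2 : ((n.choose (m + 1) : ℂ)) * ((m : ℂ) + 1)
        = (n.choose m : ℂ) * ((n : ℂ) - (m : ℂ)) := by
      have := congrArg (Nat.cast : ℕ → ℂ) (Nat.choose_succ_right_eq n m)
      push_cast [Nat.cast_sub h] at this
      linear_combination this
    linear_combination ((n.choose (m+1) : ℂ) * ((m:ℂ)+1)
      + (n.choose m : ℂ) * ((n:ℂ) - (m:ℂ))) * h2
  · have h1 : n.choose m = 0 := Nat.choose_eq_zero_of_lt h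
    have h2 : n.choose (m + 1) = 0 := Nat.choose_eq_zero_of_lt (by omega)
    simp [h1, h2]

lemma ode_aux (n : ℕ) :
    derivative (derivative (hyperPoly n)) * X
      + derivative (hyperPoly n) * X * C (2 * (n : ℂ) - 1)
      + derivative (hyperPoly n)
    = derivative (derivative (hyperPoly n)) * X ^ 2 + C ((n : ℂ) ^ 2) * hyperPoly n := by
  ext m
  rcases m with _ | _ | m
  · simp only [coeff_add, mul_coeff_zero, coeff_X_zero, mul_zero, zero_mul,
      coeff_mul_C, coeff_C_mul, coeff_mul_X_pow', coeff_derivative, coeff_hyperPoly,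
      coeff_C_zero, coeff_X_pow]
    norm_num
  · simp only [coeff_add, coeff_mul_X, coeff_mul_C, coeff_C_mul, coeff_mul_X_pow',
      coeff_derivative, coeff_hyperPoly]
    rw [if_neg (by omega)]
    have hk := key n 1
    push_cast [Nat.choose_one_right] at hk ⊢
    linear_combination hk
  · simp only [coeff_add, coeff_mul_X, coeff_mul_C, coeff_C_mul, coeff_mul_X_pow',
      coeff_derivative, coeff_hyperPoly]
    rw [if_pos (by omega : 2 ≤ m + 1 + 1), show m + 1 + 1 - 2 = m from by omega]
    have hk := key n (m + 1 + 1)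
    push_cast at hk ⊢
    linear_combination hk

lemma ode (n : ℕ) :
    X * (1 - X) * derivative (derivative (hyperPoly n))
      + (1 + C (2 * (n : ℂ) - 1) * X) * derivative (hyperPoly n)
    = C ((n : ℂ) ^ 2) * hyperPoly n := by
  linear_combination ode_aux n

section helperlemmas
variable {ι : Type*} [DecidableEq ι]

lemma prod_linear_deriv (s : Finset ι) (p : ι → ℂ) :
    derivative (∏ j ∈ s, (X - C (p j))) = ∑ i ∈ s, ∏ j ∈ s.erase i, (X - C (p j)) := by
  induction s using Finset.induction_on with
  | empty => simp
  | insert a s' h ih =>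
    rw [Finset.prod_insert h, derivative_mul, ih, Finset.sum_insert h, Finset.erase_insert h]
    simp only [derivative_sub, derivative_X, derivative_C, sub_zero, one_mul, Finset.mul_sum]
    congr 1
    refine Finset.sum_congr rfl fun i hi => ?_
    rw [Finset.erase_insert_of_ne (by rintro rfl; exact h hi),
      Finset.prod_insert (fun hmem => h (Finset.mem_of_mem_erase hmem))]

lemma eval_deriv_prod (s : Finset ι) (p : ι → ℂ) {k : ι} (hk : k ∈ s) :
    eval (p k) (derivative (∏ j ∈ s, (X - C (p j)))) = ∏ j ∈ s.erase k, (p k - p j) := by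
  rw [prod_linear_deriv, eval_finset_sum]
  rw [Finset.sum_eq_single_of_mem k hk]
  · simp [eval_prod]
  · intro i hi hne
    rw [eval_prod]
    exact Finset.prod_eq_zero (Finset.mem_erase.2 ⟨fun h => hne h.symm, hk⟩) (by simp)

lemma eval_deriv2_prod (s : Finset ι) (p : ι → ℂ) {k : ι} (hk : k ∈ s) :
    eval (p k) (derivative (derivative (∏ j ∈ s, (X - C (p j)))))
      = 2 * ∑ j ∈ s.erase k, ∏ l ∈ (s.erase k).erase j, (p k - p l) := by
  rw [prod_linear_deriv, derivative_sum]
  have hterm : ∀ i ∈ s, derivative (∏ j ∈ s.erase i, (X - C (p j)))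
      = ∑ j ∈ s.erase i, ∏ l ∈ (s.erase i).erase j, (X - C (p l)) :=
    fun i _ => prod_linear_deriv _ p
  rw [Finset.sum_congr rfl hterm, eval_finset_sum]
  rw [← Finset.add_sum_erase s _ hk]
  have h1 : eval (p k) (∑ j ∈ s.erase k, ∏ l ∈ (s.erase k).erase j, (X - C (p l)))
      = ∑ j ∈ s.erase k, ∏ l ∈ (s.erase k).erase j, (p k - p l) := by
    rw [eval_finset_sum]; simp [eval_prod]
  have h2 : ∀ i ∈ s.erase k,
      eval (p k) (∑ j ∈ s.erase i, ∏ l ∈ (s.erase i).erase j, (X - C (p l)))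
        = ∏ l ∈ (s.erase k).erase i, (p k - p l) := by
    intro i hi
    rw [eval_finset_sum]
    have hki : k ∈ s.erase i := Finset.mem_erase.2 ⟨fun h => (Finset.mem_erase.1 hi).1 h.symm, hk⟩
    rw [Finset.sum_eq_single_of_mem k hki]
    · rw [eval_prod, Finset.erase_right_comm]
      simp
    · intro j hj hne
      rw [eval_prod]
      refine Finset.prod_eq_zero (Finset.mem_erase.2 ⟨fun h => hne h.symm, hki⟩) (by simp)
  rw [h1, Finset.sum_congr rfl h2]
  ring

lemma sum_one_div_eq (t : Finset ι) (g : ι → ℂ) (hg : ∀ j ∈ t, g j ≠ 0) :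
    ∑ j ∈ t, 1 / g j = (∑ j ∈ t, ∏ l ∈ t.erase j, g l) / ∏ l ∈ t, g l := by
  rw [Finset.sum_div]
  refine Finset.sum_congr rfl fun j hj => ?_
  rw [← Finset.mul_prod_erase t g hj]
  have h1 : g j ≠ 0 := hg j hj
  have h2 : ∏ l ∈ t.erase j, g l ≠ 0 :=
    Finset.prod_ne_zero_iff.2 fun l hl => hg l (Finset.mem_of_mem_erase hl)
  field_simp

end helperlemmas

/-- Let `n ≥ 1`, let `p 1, …, p n` be the `n` distinct complex roots of `f_n`, set
`α j = 1/n` for `j = 1, …, n`, `α (n+1) = −1` and `p (n+1) = 1`.  Then all balance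
quantities vanish: `F_k = 2·∑_{j≠k} α_j/(p_k − p_j) + α_k/p_k = 0` for every
`k = 1, …, n+1`. -/
theorem stmt_6 (n : ℕ) (hn : 1 ≤ n)
    (p : Fin (n + 1) → ℂ) (α : Fin (n + 1) → ℂ)
    (hp : Function.Injective p)
    (hroots : hyperPoly n
      = ∏ j ∈ Finset.univ.erase (Fin.last n), (Polynomial.X - Polynomial.C (p j)))
    (hplast : p (Fin.last n) = 1)
    (hα : ∀ j : Fin (n + 1), j ≠ Fin.last n → α j = 1 / (n : ℂ))
    (hαlast : α (Fin.last n) = -1)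
    (k : Fin (n + 1)) :
    2 * (∑ j ∈ Finset.univ.erase k, α j / (p k - p j)) + α k / p k = 0 := by
  classical
  set s : Finset (Fin (n + 1)) := Finset.univ.erase (Fin.last n) with hs
  have hnC : (n : ℂ) ≠ 0 := Nat.cast_ne_zero.2 (by omega)
  by_cases hk : k = Fin.last n
  · -- k = last, p k = 1
    subst hk
    rw [hαlast, hplast]
    have hg : ∀ j ∈ s, (1 : ℂ) - p j ≠ 0 := by
      intro j hj
      have hjne : j ≠ Fin.last n := (Finset.mem_erase.1 hj).1
      have : p j ≠ 1 := fun h => hjne (hp (h.trans hplast.symm))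
      intro h; exact this (by linear_combination -h)
    set A : ℂ := ∑ j ∈ s, ∏ l ∈ s.erase j, (1 - p l) with hA
    set B : ℂ := ∏ l ∈ s, (1 - p l) with hB
    have hBne : B ≠ 0 := Finset.prod_ne_zero_iff.2 hg
    have hsum : ∑ j ∈ s, α j / (1 - p j) = (1 / n) * (A / B) := by
      have h1 : ∑ j ∈ s, α j / (1 - p j) = ∑ j ∈ s, (1 / (n : ℂ)) * (1 / (1 - p j)) := by
        refine Finset.sum_congr rfl fun j hj => ?_
        rw [hα j (Finset.mem_erase.1 hj).1]; ring
      rw [h1, ← Finset.mul_sum, sum_one_div_eq s _ hg]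
    have hf1 : eval 1 (hyperPoly n) = B := by
      rw [hroots, eval_prod]; simp [hB]
    have hf1' : eval 1 (derivative (hyperPoly n)) = A := by
      rw [hroots, prod_linear_deriv, eval_finset_sum]
      simp [eval_prod, hA]
    have hODE := congrArg (eval 1) (ode n)
    simp only [eval_add, eval_mul, eval_sub, eval_one, eval_X, eval_C, hf1, hf1'] at hODE
    have h3 : (n : ℂ) * (2 * A) = (n : ℂ) * ((n : ℂ) * B) := by linear_combination hODE
    have h4 := mul_left_cancel₀ hnC h3
    rw [hsum]
    field_simp
    linear_combination h4
  · -- k ≠ last, p k is a root of hyperPoly n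
    have hks : k ∈ s := Finset.mem_erase.2 ⟨hk, Finset.mem_univ k⟩
    set D : ℂ := ∏ j ∈ s.erase k, (p k - p j) with hD
    set E : ℂ := ∑ j ∈ s.erase k, ∏ l ∈ (s.erase k).erase j, (p k - p l) with hE
    have hg : ∀ j ∈ s.erase k, p k - p j ≠ 0 := by
      intro j hj
      exact sub_ne_zero.2 fun h => (Finset.mem_erase.1 hj).1 (hp h.symm)
    have hDne : D ≠ 0 := Finset.prod_ne_zero_iff.2 hg
    have hf0 : eval (p k) (hyperPoly n) = 0 := by
      rw [hroots, eval_prod]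
      exact Finset.prod_eq_zero hks (by simp)
    have hd1 : eval (p k) (derivative (hyperPoly n)) = D := by
      rw [hroots]; exact eval_deriv_prod s p hks
    have hd2 : eval (p k) (derivative (derivative (hyperPoly n))) = 2 * E := by
      rw [hroots]; exact eval_deriv2_prod s p hks
    have hpk0 : p k ≠ 0 := by
      intro h
      have h1 : eval 0 (hyperPoly n) = 1 := by
        rw [← Polynomial.coeff_zero_eq_eval_zero, coeff_hyperPoly]; simp
      rw [h] at hf0
      rw [hf0] at h1
      exact zero_ne_one h1
    have hpk1 : p k - 1 ≠ 0 := by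
      refine sub_ne_zero.2 fun h => hk (hp ?_)
      rw [h, hplast]
    have hODE := congrArg (eval (p k)) (ode n)
    simp only [eval_add, eval_mul, eval_sub, eval_one, eval_X, eval_C, hf0, hd1, hd2,
      mul_zero] at hODE
    -- split the sum
    have hlast : Fin.last n ∈ Finset.univ.erase k :=
      Finset.mem_erase.2 ⟨fun h => hk h.symm, Finset.mem_univ _⟩
    rw [← Finset.add_sum_erase _ _ hlast, hαlast, hplast]
    have hset : (Finset.univ.erase k).erase (Fin.last n) = s.erase k := by
      rw [hs, Finset.erase_right_comm]
    rw [hset]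
    have hsum : ∑ j ∈ s.erase k, α j / (p k - p j) = (1 / n) * (E / D) := by
      have h1 : ∑ j ∈ s.erase k, α j / (p k - p j)
          = ∑ j ∈ s.erase k, (1 / (n : ℂ)) * (1 / (p k - p j)) := by
        refine Finset.sum_congr rfl fun j hj => ?_
        rw [hα j (Finset.mem_erase.1 (Finset.mem_of_mem_erase hj)).1]; ring
      rw [h1, ← Finset.mul_sum, sum_one_div_eq _ _ hg]
    rw [hsum, hα k hk]
    field_simp
    linear_combination (-1 : ℂ) * hODE
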